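/- Let A be an n×n real matrix with det(A) ≠ 0, and let B₁ = {x ∈ ℝⁿ : ‖x‖₁ ≤ 1} be the closed unit ℓ₁-ball. Then vol(B₁ ∩ cone(A)) ≥ (|det(A)| / (2‖A‖_∞)ⁿ) · vol(B₁) ≥ (|det(A)| / (2‖A‖_max·c(A))ⁿ) · vol(B₁), where ‖A‖_∞ := max_j ∑_i |A_{ij}| is the maximum ℓ₁-norm of a column of A, ‖A‖_max = max_{i,j} |A_{ij}|, and c(A) is the maximum number of nonzero entries in a column of A. -/

import Mathlib

open Matrix MeasureTheory
open scoped Classical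

/-- The conic hull `cone(A) = {A y : y ≥ 0}` of the columns of a square matrix `A`. -/
def matrixCone (n : ℕ) (A : Matrix (Fin n) (Fin n) ℝ) : Set (Fin n → ℝ) :=
  {v | ∃ y : Fin n → ℝ, (∀ i, 0 ≤ y i) ∧ v = A.mulVec y}

lemma vol_image_mulVec {n : ℕ} (A : Matrix (Fin n) (Fin n) ℝ) (s : Set (Fin n → ℝ)) :
    volume (A.mulVec '' s) = ENNReal.ofReal |A.det| * volume s := by
  have h := Measure.addHaar_image_linearMap (μ := volume) A.mulVecLin s
  rw [← Matrix.toLin'_apply', LinearMap.det_toLin'] at h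
  exact h

lemma vol_ball_le {n : ℕ} :
    volume {x : Fin n → ℝ | ∑ i, |x i| ≤ 1}
      ≤ 2 ^ n * volume {y : Fin n → ℝ | (∀ i, 0 ≤ y i) ∧ ∑ i, y i ≤ 1} := by
  set S := {y : Fin n → ℝ | (∀ i, 0 ≤ y i) ∧ ∑ i, y i ≤ 1} with hS
  have hsub : {x : Fin n → ℝ | ∑ i, |x i| ≤ 1} ⊆
      ⋃ ε : Fin n → Bool,
        (Matrix.diagonal (fun i => if ε i then (1:ℝ) else -1)).mulVec '' S := by
    intro x hx
    refine Set.mem_iUnion.2 ⟨fun i => decide (0 ≤ x i),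
      ⟨fun i => |x i|, ⟨fun i => abs_nonneg _, hx⟩, ?_⟩⟩
    funext i
    rw [Matrix.mulVec_diagonal]
    by_cases h : 0 ≤ x i
    · simp [h, abs_of_nonneg h]
    · simp [h, abs_of_neg (lt_of_not_ge h)]
  have himg : ∀ ε : Fin n → Bool,
      volume ((Matrix.diagonal (fun i => if ε i then (1:ℝ) else -1)).mulVec '' S)
        = volume S := by
    intro ε
    rw [vol_image_mulVec, Matrix.det_diagonal]
    have : |∏ i, (if ε i then (1:ℝ) else -1)| = 1 := by
      rw [Finset.abs_prod]
      refine Finset.prod_eq_one fun i _ => ?_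
      by_cases h : ε i <;> simp [h]
    rw [this, ENNReal.ofReal_one, one_mul]
  calc volume {x : Fin n → ℝ | ∑ i, |x i| ≤ 1}
      ≤ ∑' ε : Fin n → Bool,
          volume ((Matrix.diagonal (fun i => if ε i then (1:ℝ) else -1)).mulVec '' S) :=
        (measure_mono hsub).trans (measure_iUnion_le _)
    _ = ∑' _ : Fin n → Bool, volume S := by simp_rw [himg]
    _ = 2 ^ n * volume S := by
        rw [tsum_fintype, Finset.sum_const, nsmul_eq_mul]
        congr 1
        simp [Fintype.card_fun]


/-- For a nonsingular `n×n` real matrix `A` and the closed unit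
`ℓ₁`-ball `B₁`, one has
`vol(B₁ ∩ cone(A)) ≥ (|det A| / (2‖A‖_∞)ⁿ)·vol(B₁) ≥ (|det A| / (2‖A‖_max·c(A))ⁿ)·vol(B₁)`,
where `‖A‖_∞` is the maximum column `ℓ₁`-norm, `‖A‖_max` the maximum absolute value of an
entry, and `c(A)` the maximum number of nonzero entries in a column. -/
theorem volume_l1Ball_inter_cone_ge (n : ℕ) (A : Matrix (Fin n) (Fin n) ℝ)
    (hA : A.det ≠ 0) :
    ENNReal.ofReal (|A.det| / (2 * ⨆ j : Fin n, ∑ i, |A i j|) ^ n) *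
        volume {x : Fin n → ℝ | ∑ i, |x i| ≤ 1}
      ≤ volume ({x : Fin n → ℝ | ∑ i, |x i| ≤ 1} ∩ matrixCone n A) ∧
    ENNReal.ofReal (|A.det| /
          (2 * (⨆ i : Fin n, ⨆ j : Fin n, |A i j|) *
            ((⨆ j : Fin n, (Finset.univ.filter fun i : Fin n => A i j ≠ 0).card : ℕ) : ℝ)) ^ n) *
        volume {x : Fin n → ℝ | ∑ i, |x i| ≤ 1}
      ≤ ENNReal.ofReal (|A.det| / (2 * ⨆ j : Fin n, ∑ i, |A i j|) ^ n) *
        volume {x : Fin n → ℝ | ∑ i, |x i| ≤ 1} := by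
  rcases Nat.eq_zero_or_pos n with hn | hn
  · subst hn
    constructor
    · have hc : {x : Fin 0 → ℝ | ∑ i, |x i| ≤ 1} ∩ matrixCone 0 A
          = {x : Fin 0 → ℝ | ∑ i, |x i| ≤ 1} := by
        refine Set.inter_eq_left.2 fun x _ => ⟨0, fun i => le_refl _, Subsingleton.elim _ _⟩
      rw [hc]
      simp [Matrix.det_fin_zero]
    · simp
  haveI : Nonempty (Fin n) := ⟨⟨0, hn⟩⟩
  set S := {y : Fin n → ℝ | (∀ i, 0 ≤ y i) ∧ ∑ i, y i ≤ 1} with hSdef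
  set M := ⨆ j : Fin n, ∑ i, |A i j| with hMdef
  have hcol : ∀ j, ∑ i, |A i j| ≤ M := fun j =>
    le_ciSup (f := fun j : Fin n => ∑ i, |A i j|) (Set.Finite.bddAbove (Set.finite_range _)) j
  have hM : 0 < M := by
    rcases lt_or_ge 0 M with h | h
    · exact h
    · exfalso; apply hA
      have hA0 : A = 0 := by
        ext i j
        have h1 : ∑ i, |A i j| ≤ 0 := (hcol j).trans h
        have h2 : ∀ i ∈ Finset.univ, (0:ℝ) ≤ |A i j| := fun i _ => abs_nonneg _
        have h3 := (Finset.sum_eq_zero_iff_of_nonneg h2).1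
          (le_antisymm h1 (Finset.sum_nonneg h2))
        simpa using abs_eq_zero.1 (h3 i (Finset.mem_univ i))
      rw [hA0, Matrix.det_zero]
  constructor
  · -- first inequality
    have key : (M⁻¹ • A).mulVec '' S ⊆
        {x : Fin n → ℝ | ∑ i, |x i| ≤ 1} ∩ matrixCone n A := by
      rintro _ ⟨y, ⟨hy0, hy1⟩, rfl⟩
      constructor
      · show ∑ i, |((M⁻¹ • A).mulVec y) i| ≤ 1
        have hsm : ∀ i, ((M⁻¹ • A).mulVec y) i = M⁻¹ * (A.mulVec y) i := by
          intro i; rw [Matrix.smul_mulVec]; rfl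
        calc ∑ i, |((M⁻¹ • A).mulVec y) i| = M⁻¹ * ∑ i, |(A.mulVec y) i| := by
              rw [Finset.mul_sum]
              refine Finset.sum_congr rfl fun i _ => ?_
              rw [hsm i, abs_mul, abs_of_nonneg (inv_nonneg.2 hM.le)]
          _ ≤ M⁻¹ * (M * 1) := by
              refine mul_le_mul_of_nonneg_left ?_ (inv_nonneg.2 hM.le)
              calc ∑ i, |(A.mulVec y) i|
                  ≤ ∑ i, ∑ j, |A i j| * y j := by
                    refine Finset.sum_le_sum fun i _ => ?_
                    calc |(A.mulVec y) i| = |∑ j, A i j * y j| := rfl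
                      _ ≤ ∑ j, |A i j * y j| := Finset.abs_sum_le_sum_abs _ _
                      _ = ∑ j, |A i j| * y j := by
                          refine Finset.sum_congr rfl fun j _ => ?_
                          rw [abs_mul, abs_of_nonneg (hy0 j)]
                _ = ∑ j, (∑ i, |A i j|) * y j := by
                    rw [Finset.sum_comm]
                    exact Finset.sum_congr rfl fun j _ => (Finset.sum_mul _ _ _).symm
                _ ≤ ∑ j, M * y j := Finset.sum_le_sum fun j _ =>
                    mul_le_mul_of_nonneg_right (hcol j) (hy0 j)
                _ = M * ∑ j, y j := (Finset.mul_sum _ _ _).symm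
                _ ≤ M * 1 := mul_le_mul_of_nonneg_left hy1 hM.le
          _ = 1 := by field_simp
      · exact ⟨M⁻¹ • y, fun i => mul_nonneg (inv_nonneg.2 hM.le) (hy0 i),
          by rw [Matrix.mulVec_smul, Matrix.smul_mulVec]⟩
    have himg : volume ((M⁻¹ • A).mulVec '' S)
        = ENNReal.ofReal ((M⁻¹) ^ n * |A.det|) * volume S := by
      rw [vol_image_mulVec, Matrix.det_smul]
      congr 2
      rw [abs_mul, abs_pow, abs_of_nonneg (inv_nonneg.2 hM.le)]
      simp
    have hreal : |A.det| / (2 * M) ^ n * 2 ^ n = (M⁻¹) ^ n * |A.det| := by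
      rw [mul_pow]
      field_simp
      ring
      rw [← mul_pow, mul_inv_cancel₀ hM.ne', one_pow]
    calc ENNReal.ofReal (|A.det| / (2 * M) ^ n) * volume {x : Fin n → ℝ | ∑ i, |x i| ≤ 1}
        ≤ ENNReal.ofReal (|A.det| / (2 * M) ^ n) * (2 ^ n * volume S) :=
          mul_le_mul_right vol_ball_le _
      _ = ENNReal.ofReal (|A.det| / (2 * M) ^ n) * ENNReal.ofReal ((2:ℝ) ^ n) * volume S := by
          rw [← mul_assoc]
          congr 2
          rw [ENNReal.ofReal_pow (by norm_num)]
          norm_num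
      _ = ENNReal.ofReal (|A.det| / (2 * M) ^ n * 2 ^ n) * volume S := by
          rw [ENNReal.ofReal_mul (by positivity)]
      _ = ENNReal.ofReal ((M⁻¹) ^ n * |A.det|) * volume S := by rw [hreal]
      _ = volume ((M⁻¹ • A).mulVec '' S) := himg.symm
      _ ≤ volume ({x : Fin n → ℝ | ∑ i, |x i| ≤ 1} ∩ matrixCone n A) := measure_mono key
  · -- second inequality
    set K := ⨆ i : Fin n, ⨆ j : Fin n, |A i j| with hKdef
    set cN := ⨆ j : Fin n, (Finset.univ.filter fun i : Fin n => A i j ≠ 0).card with hcNdef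
    have hK : ∀ i j, |A i j| ≤ K := fun i j =>
      (le_ciSup (f := fun j : Fin n => |A i j|) (Set.Finite.bddAbove (Set.finite_range _)) j).trans
        (le_ciSup (f := fun i : Fin n => ⨆ j : Fin n, |A i j|)
          (Set.Finite.bddAbove (Set.finite_range _)) i)
    have hK0 : 0 ≤ K := (abs_nonneg _).trans (hK ⟨0, hn⟩ ⟨0, hn⟩)
    have hcard : ∀ j : Fin n,
        ((Finset.univ.filter fun i : Fin n => A i j ≠ 0).card : ℝ) ≤ (cN : ℝ) := by
      intro j
      exact_mod_cast le_ciSup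
        (f := fun j : Fin n => (Finset.univ.filter fun i : Fin n => A i j ≠ 0).card)
        (Set.Finite.bddAbove (Set.finite_range _)) j
    have hMle : M ≤ K * (cN : ℝ) := by
      refine ciSup_le fun j => ?_
      have h1 : ∑ i, |A i j| = ∑ i ∈ Finset.univ.filter fun i : Fin n => A i j ≠ 0, |A i j| :=
        (Finset.sum_subset (Finset.filter_subset _ _) fun i _ hi => by
          simp only [Finset.mem_filter, Finset.mem_univ, true_and, not_not] at hi
          simp [hi]).symm
      have h2 : ∑ i ∈ Finset.univ.filter fun i : Fin n => A i j ≠ 0, |A i j|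
          ≤ ((Finset.univ.filter fun i : Fin n => A i j ≠ 0).card : ℝ) * K := by
        have := Finset.sum_le_card_nsmul (Finset.univ.filter fun i : Fin n => A i j ≠ 0)
          (fun i => |A i j|) K (fun i _ => hK i j)
        simpa [nsmul_eq_mul] using this
      calc ∑ i, |A i j| ≤ ((Finset.univ.filter fun i : Fin n => A i j ≠ 0).card : ℝ) * K :=
            h1 ▸ h2
        _ ≤ (cN : ℝ) * K := mul_le_mul_of_nonneg_right (hcard j) hK0
        _ = K * (cN : ℝ) := mul_comm _ _
    refine mul_le_mul_left (ENNReal.ofReal_le_ofReal ?_) _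
    refine div_le_div_of_nonneg_left (abs_nonneg _) ?_ ?_
    · exact pow_pos (by linarith) n
    · refine pow_le_pow_left₀ (by linarith) ?_ n
      calc 2 * M ≤ 2 * (K * (cN : ℝ)) := by linarith
        _ = 2 * K * (cN : ℝ) := by ring
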